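/- Let T ∈ F^{N×N}, with N = Σ_{i∈V} n_i, be a nonsingular (invertible) TSS matrix on a finite connected acyclic undirected graph G = (V,E) with rank profile ρ, where the row and column block partitions coincide (m_i = n_i for all i). Then T⁻¹ admits a TSS representation on G with the same rank profile ρ. -/

import Mathlib

open Matrix

attribute [local instance] Classical.propDecidable

namespace TSS

variable {F : Type*} [Field F] {V : Type*} [Fintype V] [DecidableEq V]

/-- The `(i,j)` block of a graph-partitioned matrix. -/
def blockOf {m n : V → ℕ} (T : Matrix ((i : V) × Fin (m i)) ((j : V) × Fin (n j)) F)
    (i j : V) : Matrix (Fin (m i)) (Fin (n j)) F :=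
  fun a b => T ⟨i, a⟩ ⟨j, b⟩

/-- The submatrix `T⟨A,B⟩` of a graph-partitioned matrix. -/
def subBlock {m n : V → ℕ} (T : Matrix ((i : V) × Fin (m i)) ((j : V) × Fin (n j)) F)
    (A B : Set V) :
    Matrix {p : (i : V) × Fin (m i) // p.1 ∈ A} {q : (j : V) × Fin (n j) // q.1 ∈ B} F :=
  T.submatrix (fun p => p.1) (fun q => q.1)

/-- The Hankel block `T⟨Ā,A⟩` induced by `A`. -/
def hankelBlock {m n : V → ℕ} (T : Matrix ((i : V) × Fin (m i)) ((j : V) × Fin (n j)) F)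
    (A : Set V) :
    Matrix {p : (i : V) × Fin (m i) // p.1 ∈ Aᶜ} {q : (j : V) × Fin (n j) // q.1 ∈ A} F :=
  subBlock T Aᶜ A

/-- The number of border edges of `A`: edges of `G` with one endpoint in `A` and the other
outside of `A` (each such undirected edge is counted once, via its orientation out of `A`). -/
noncomputable def edgeCount (G : SimpleGraph V) (A : Set V) : ℕ :=
  Nat.card {e : V × V // e.1 ∈ A ∧ e.2 ∉ A ∧ G.Adj e.1 e.2}

/-- The vertex set of the connected component containing `i` after deleting the edge `{i,j}`. -/
def side (G : SimpleGraph V) (i j : V) : Set V :=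
  {v | (G.deleteEdges {s(i, j)}).Reachable i v}

/-- The unit Hankel block associated with the directed edge `(i,j)`. -/
def unitHankel (G : SimpleGraph V) {m n : V → ℕ}
    (T : Matrix ((i : V) × Fin (m i)) ((j : V) × Fin (n j)) F) (i j : V) :=
  hankelBlock T (side G i j)

/-- `outChain Out Trans k i w j` is the product
`Out^i_{p_{ν−1}} · Trans^{p_{ν−1}}_{i,p_{ν−2}} ⋯ Trans^{k}_{p₁,j}` along the walk
`w : k = p₀ − p₁ − ⋯ − p_ν = i`, with incoming edge `(j,k)`. -/
noncomputable def outChain {G : SimpleGraph V} {m : V → ℕ} {ρ : V → V → ℕ}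
    (Out : ∀ k i : V, Matrix (Fin (m k)) (Fin (ρ i k)) F)
    (Trans : ∀ k i j : V, Matrix (Fin (ρ k i)) (Fin (ρ j k)) F) :
    ∀ (k i : V), G.Walk k i → ∀ j : V, Matrix (Fin (m i)) (Fin (ρ j k)) F
  | k, _, .nil, j => Out k j
  | k, _, .cons (v := k') _ w, j => outChain Out Trans k' _ w k * Trans k k' j

/-- `pathMatrix Inp Trans Out j i w` is the product
`Out^i_{p_{ν−1}} · Trans^{p_{ν−1}}_{i,p_{ν−2}} ⋯ Trans^{p₁}_{p₂,j} · Inp^j_{p₁}` along the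
walk `w : j = p₀ − p₁ − ⋯ − p_ν = i` (and junk `0` for the empty walk). -/
noncomputable def pathMatrix {G : SimpleGraph V} {m n : V → ℕ} {ρ : V → V → ℕ}
    (Inp : ∀ k j : V, Matrix (Fin (ρ k j)) (Fin (n k)) F)
    (Trans : ∀ k i j : V, Matrix (Fin (ρ k i)) (Fin (ρ j k)) F)
    (Out : ∀ k i : V, Matrix (Fin (m k)) (Fin (ρ i k)) F) :
    ∀ (j i : V), G.Walk j i → Matrix (Fin (m i)) (Fin (n j)) F
  | _, _, .nil => 0
  | j, i, .cons (v := p1) _ w => outChain Out Trans p1 i w j * Inp j p1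

/-- A TSS representation of the graph-partitioned matrix `T` on the tree `G`, with
output dimensions `m`, input dimensions `n` and rank profile `ρ` (only the values of the
generators and of `ρ` on (pairs of adjoining) directed edges of `G` are relevant). -/
structure TSSRepr (G : SimpleGraph V) (m n : V → ℕ) (ρ : V → V → ℕ)
    (T : Matrix ((i : V) × Fin (m i)) ((j : V) × Fin (n j)) F) where
  D : ∀ k : V, Matrix (Fin (m k)) (Fin (n k)) F
  Inp : ∀ k j : V, Matrix (Fin (ρ k j)) (Fin (n k)) F
  Trans : ∀ k i j : V, Matrix (Fin (ρ k i)) (Fin (ρ j k)) F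
  Out : ∀ k i : V, Matrix (Fin (m k)) (Fin (ρ i k)) F
  diag : ∀ i : V, blockOf T i i = D i
  offdiag : ∀ {i j : V}, i ≠ j → ∀ w : G.Walk j i, w.IsPath →
      blockOf T i j = pathMatrix Inp Trans Out j i w


set_option linter.unusedSectionVars false
set_option maxHeartbeats 1600000
set_option synthInstance.maxHeartbeats 400000

section Graph
variable {V : Type*} [Fintype V] [DecidableEq V] {G : SimpleGraph V}
open SimpleGraph

variable {G : SimpleGraph V}

lemma self_mem_side (i j : V) : i ∈ side G i j := Reachable.refl i

lemma mem_side_of_adj {u v i j : V} (hu : u ∈ side G i j) (h : G.Adj u v)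
    (hne : s(u, v) ≠ s(i, j)) : v ∈ side G i j :=
  Reachable.trans hu (SimpleGraph.Adj.reachable (by simp [h, hne]))

lemma not_reachable_delete (hG : G.IsTree) {i j : V} (h : G.Adj i j) :
    ¬ (G.deleteEdges {s(i, j)}).Reachable i j :=
  (((isAcyclic_iff_forall_adj_isBridge.mp hG.IsAcyclic) h) : _)

lemma side_disjoint (hG : G.IsTree) {i j v : V} (h : G.Adj i j)
    (h1 : v ∈ side G i j) (h2 : v ∈ side G j i) : False := by
  apply not_reachable_delete hG h
  have h2' : (G.deleteEdges {s(i, j)}).Reachable j v := by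
    rwa [show s(i,j) = s(j,i) from Sym2.eq_swap]
  exact h1.trans h2'.symm

private lemma cover_aux {i j : V} : ∀ {a b : V}, G.Walk a b →
    a ∈ side G i j ∨ a ∈ side G j i → b ∈ side G i j ∨ b ∈ side G j i := by
  intro a b w
  induction w with
  | nil => exact id
  | @cons a u b h w ih =>
    intro ha
    apply ih
    rcases ha with ha | ha
    · by_cases he : s(a, u) = s(i, j)
      · rcases Sym2.eq_iff.mp he with ⟨h1, h2⟩ | ⟨h1, h2⟩
        · cases h2; exact Or.inr (self_mem_side _ _)
        · cases h2; exact Or.inl (self_mem_side _ _)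
      · exact Or.inl (mem_side_of_adj ha h he)
    · by_cases he : s(a, u) = s(j, i)
      · rcases Sym2.eq_iff.mp he with ⟨h1, h2⟩ | ⟨h1, h2⟩
        · cases h2; exact Or.inl (self_mem_side _ _)
        · cases h2; exact Or.inr (self_mem_side _ _)
      · exact Or.inr (mem_side_of_adj ha h he)

lemma side_cover (hG : G.IsTree) {i j : V} (v : V) :
    v ∈ side G i j ∨ v ∈ side G j i := by
  obtain ⟨w⟩ := (hG.isConnected.preconnected i v)
  exact cover_aux w (Or.inl (self_mem_side i j))

lemma compl_side (hG : G.IsTree) {i j : V} (h : G.Adj i j) :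
    (side G i j)ᶜ = side G j i := by
  ext v
  constructor
  · intro hv
    rcases side_cover hG (i := i) (j := j) v with h' | h'
    · exact absurd h' hv
    · exact h'
  · intro hv hv'
    exact side_disjoint hG h hv' hv

private lemma subset_aux (hG : G.IsTree) {i j k : V} (hjk : G.Adj j k) (hki : G.Adj k i)
    (hij : i ≠ j) : ∀ {a b : V}, (G.deleteEdges {s(j, k)}).Walk a b →
    a ∈ side G k i ∧ (G.deleteEdges {s(j, k)}).Reachable j a →
    b ∈ side G k i ∧ (G.deleteEdges {s(j, k)}).Reachable j b := by
  intro a b w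
  induction w with
  | nil => exact id
  | @cons a u b h w ih =>
    rintro ⟨ha, hra⟩
    apply ih
    have hadj : G.Adj a u := (G.deleteEdges_le _) h
    have hne : s(a, u) ≠ s(j, k) := fun hh => h.2 ((SimpleGraph.fromEdgeSet_adj _).mpr ⟨by rw [hh]; exact rfl, hadj.ne⟩)
    have hru : (G.deleteEdges {s(j, k)}).Reachable j u := hra.trans h.reachable
    refine ⟨?_, hru⟩
    by_cases he : s(a, u) = s(k, i)
    · rcases Sym2.eq_iff.mp he with ⟨h1, h2⟩ | ⟨h1, h2⟩
      · exact absurd (h1 ▸ hra) (not_reachable_delete hG hjk)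
      · exact absurd (h1 ▸ ha) (fun hb => side_disjoint hG hki.symm (self_mem_side i k) hb)
    · exact mem_side_of_adj ha hadj he

lemma side_subset_side (hG : G.IsTree) {i j k : V} (hjk : G.Adj j k) (hki : G.Adj k i)
    (hij : i ≠ j) : side G j k ⊆ side G k i := by
  have hjki : j ∈ side G k i := by
    refine mem_side_of_adj (self_mem_side k i) hjk.symm ?_
    intro he
    rcases Sym2.eq_iff.mp he with ⟨h1, h2⟩ | ⟨h1, h2⟩
    · exact hij h2.symm
    · exact hjk.ne h2
  intro v hv
  obtain ⟨w⟩ := hv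
  exact (subset_aux hG hjk hki hij w ⟨hjki, Reachable.refl j⟩).1

lemma end_mem_side {k k' i : V} (w : G.Walk k' i) (hk : k ∉ w.support) :
    i ∈ side G k' k := by
  refine ⟨w.toDeleteEdges {s(k', k)} ?_⟩
  intro e he hmem
  rw [Set.mem_singleton_iff] at hmem
  subst hmem
  exact hk (w.snd_mem_support_of_mem_edges he)


end Graph

section LinAlg
open SimpleGraph


lemma sum_dite_subtype {ι M : Type*} [Fintype ι] [AddCommMonoid M] (P : ι → Prop)
    [DecidablePred P] (g : {q // P q} → M) :
    ∑ q : ι, (if h : P q then g ⟨q, h⟩ else 0) = ∑ q : {q // P q}, g q := by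
  rw [← Finset.sum_filter_of_ne (s := Finset.univ)
      (p := P) (f := fun q => if h : P q then g ⟨q, h⟩ else 0)
      (by intro x _ hx; by_contra hP; exact hx (by simp [hP]))]
  rw [Finset.sum_subtype (p := P) (Finset.univ.filter P) (by simp) _]
  exact Finset.sum_congr rfl (fun q _ => dif_pos q.2)

lemma sum_dite_fin {M : Type*} [AddCommMonoid M] {r d : ℕ} (hdr : d ≤ r) (g : Fin d → M) :
    (∑ l : Fin r, if h : (l : ℕ) < d then g ⟨l, h⟩ else 0) = ∑ m : Fin d, g m := by
  rw [sum_dite_subtype (fun l : Fin r => (l : ℕ) < d) (fun q => g ⟨q.1, q.2⟩)]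
  exact Fintype.sum_equiv ⟨fun l => ⟨l.1.1, l.2⟩, fun m => ⟨⟨m.1, lt_of_lt_of_le m.2 hdr⟩, m.2⟩,
    fun l => by ext; rfl, fun m => by ext; rfl⟩ _ _ (fun l => rfl)

lemma rows_rank_finrank {α β : Type*} [Fintype α] [Fintype β] (M : Matrix α β F) :
    Module.finrank F (Submodule.span F (Set.range fun i => M i)) = M.rank := by
  have h1 := Matrix.rank_eq_finrank_span_cols (Mᵀ)
  rw [Matrix.rank_transpose] at h1
  exact (h1.symm : _)

lemma exists_factorization {α β : Type*} [Fintype α] [Fintype β] (M : Matrix α β F) {r : ℕ}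
    (hr : M.rank ≤ r) : ∃ (R : Matrix α (Fin r) F) (C : Matrix (Fin r) β F),
      M = R * C ∧ ∀ l, C l ∈ Submodule.span F (Set.range fun i => M i) := by
  set W := Submodule.span F (Set.range fun i => M i) with hW
  have hd : Module.finrank F W ≤ r := by rw [rows_rank_finrank]; exact hr
  set d := Module.finrank F W with hdd
  let b : Module.Basis (Fin d) F W := Module.finBasis F W
  refine ⟨fun i l => if h : (l : ℕ) < d then
      (b.repr ⟨M i, Submodule.subset_span (Set.mem_range_self i)⟩) ⟨l, h⟩ else 0,
    fun l j => if h : (l : ℕ) < d then ((b ⟨l, h⟩ : W) : β → F) j else 0, ?_, ?_⟩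
  · ext i j
    show M i j = ∑ l : Fin r, (if h : (l : ℕ) < d then
      (b.repr ⟨M i, Submodule.subset_span (Set.mem_range_self i)⟩) ⟨l, h⟩ else 0) *
      (if h : (l : ℕ) < d then ((b ⟨l, h⟩ : W) : β → F) j else 0)
    set x : W := ⟨M i, Submodule.subset_span (Set.mem_range_self i)⟩ with hxdef
    have hterm : ∀ l : Fin r, (if h : (l : ℕ) < d then (b.repr x) ⟨l, h⟩ else 0) *
        (if h : (l : ℕ) < d then ((b ⟨l, h⟩ : W) : β → F) j else 0) =
        (if h : (l : ℕ) < d then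
          (b.repr x) ⟨l, h⟩ * ((b ⟨l, h⟩ : W) : β → F) j else 0) := by
      intro l; by_cases h : (l : ℕ) < d
      · rw [dif_pos h, dif_pos h, dif_pos h]
      · rw [dif_neg h, dif_neg h, dif_neg h, zero_mul]
    rw [Finset.sum_congr rfl (fun l _ => hterm l),
      sum_dite_fin hd (fun m => (b.repr x) m * ((b m : W) : β → F) j)]
    let ev : W →ₗ[F] F := (LinearMap.proj j).comp W.subtype
    have h3 : M i j = ev x := rfl
    rw [h3, ← b.sum_repr x, _root_.map_sum ev (fun m => b.repr x m • b m) Finset.univ]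
    exact Finset.sum_congr rfl (fun m _ => by
      simp [ev, _root_.map_smul, smul_eq_mul])
  · intro l
    dsimp only
    by_cases h : (l : ℕ) < d
    · have : (fun j => if h : (l : ℕ) < d then ((b ⟨l, h⟩ : W) : β → F) j else 0) =
          ((b ⟨l, h⟩ : W) : β → F) := funext fun j => dif_pos h
      rw [this]
      exact (b ⟨l, h⟩).2
    · have : (fun j => if h : (l : ℕ) < d then ((b ⟨l, h⟩ : W) : β → F) j else 0) =
          (0 : β → F) := funext fun j => dif_neg h
      rw [this]
      exact Submodule.zero_mem W

lemma exists_left_solution {α β : Type*} [Fintype α] [Fintype β] {r : ℕ}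
    (C : Matrix (Fin r) β F) (D : Matrix α β F)
    (h : ∀ g, D g ∈ Submodule.span F (Set.range fun l => C l)) :
    ∃ X : Matrix α (Fin r) F, X * C = D := by
  choose c hc using fun g => (Submodule.mem_span_range_iff_exists_fun F).mp (h g)
  refine ⟨fun g l => c g l, ?_⟩
  ext g j
  show ∑ l, c g l * C l j = D g j
  have := congrFun (hc g) j
  rw [Finset.sum_apply] at this
  simpa using this

lemma row_mul_mem_span {α β : Type*} [Fintype α] [Fintype β] {r : ℕ}
    (R : Matrix α (Fin r) F) (C : Matrix (Fin r) β F) (p : α) :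
    (R * C) p ∈ Submodule.span F (Set.range fun l => C l) := by
  refine (Submodule.mem_span_range_iff_exists_fun F).mpr ⟨R p, ?_⟩
  ext j
  rw [Finset.sum_apply]
  simp [Matrix.mul_apply]

lemma comp_mem_span {β γ κ : Type*} (v : κ → β → F) (x : β → F) (f : γ → β)
    (hx : x ∈ Submodule.span F (Set.range v)) :
    (fun g => x (f g)) ∈ Submodule.span F (Set.range fun l => fun g => v l (f g)) := by
  have h2 := Submodule.mem_map_of_mem (f := LinearMap.funLeft F F f) hx
  rw [Submodule.map_span, ← Set.range_comp] at h2
  exact h2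



namespace Null
variable {ι : Type*} [Fintype ι] [DecidableEq ι] (P : ι → Prop) [DecidablePred P]

noncomputable def Ext : ({q // P q} → F) →ₗ[F] (ι → F) where
  toFun x q := if h : P q then x ⟨q, h⟩ else 0
  map_add' x y := funext fun q => by by_cases h : P q <;> simp [h]
  map_smul' c x := funext fun q => by by_cases h : P q <;> simp [h]

noncomputable def Res : (ι → F) →ₗ[F] ({q // P q} → F) :=
  LinearMap.funLeft F F (fun q => (q : ι))

def HK (S : Matrix ι ι F) : Matrix {p // ¬ P p} {q // P q} F :=
  S.submatrix Subtype.val Subtype.val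

lemma ext_apply_pos (x : {q // P q} → F) {q : ι} (h : P q) : Ext P x q = x ⟨q, h⟩ := dif_pos h
lemma ext_apply_neg (x : {q // P q} → F) {q : ι} (h : ¬ P q) : Ext P x q = 0 := dif_neg h

lemma key1 (S : Matrix ι ι F) (x : {q // P q} → F) (hx : HK P S *ᵥ x = 0)
    {p : ι} (hp : ¬ P p) : (S *ᵥ Ext P x) p = 0 := by
  have : (S *ᵥ Ext P x) p = (HK P S *ᵥ x) ⟨p, hp⟩ := by
    rw [Matrix.mulVec, Matrix.mulVec]
    show (∑ q : ι, S p q * Ext P x q) = ∑ q : {q // P q}, S p q.1 * x q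
    rw [← sum_dite_subtype P (fun q : {q // P q} => S p q.1 * x q)]
    refine Finset.sum_congr rfl (fun q _ => ?_)
    by_cases h : P q
    · rw [dif_pos h, ext_apply_pos P x h]
    · rw [dif_neg h, ext_apply_neg P x h, mul_zero]
  rw [this, hx]
  rfl

lemma key2 (S : Matrix ι ι F) (x : {q // P q} → F) (hx : HK P S *ᵥ x = 0) :
    Ext P (Res P (S *ᵥ Ext P x)) = S *ᵥ Ext P x := by
  funext q
  by_cases h : P q
  · rw [ext_apply_pos P _ h]; rfl
  · rw [ext_apply_neg P _ h, key1 P S x hx h]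

noncomputable def Phi (S : Matrix ι ι F) : ({q // P q} → F) →ₗ[F] ({q // P q} → F) :=
  (Res P) ∘ₗ S.mulVecLin ∘ₗ (Ext P)

lemma phi_apply (S : Matrix ι ι F) (x : {q // P q} → F) :
    Phi P S x = Res P (S *ᵥ Ext P x) := rfl

lemma res_ext (x : {q // P q} → F) : Res P (Ext P x) = x := by
  funext q
  show Ext P x q.1 = x q
  rw [ext_apply_pos P x q.2]

lemma phi_mem_ker {S U : Matrix ι ι F} (hUS : U * S = 1) (x : {q // P q} → F)
    (hx : x ∈ LinearMap.ker (HK P S).mulVecLin) :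
    Phi P S x ∈ LinearMap.ker (HK P U).mulVecLin := by
  have hx' : HK P S *ᵥ x = 0 := hx
  rw [LinearMap.mem_ker]
  show HK P U *ᵥ (Phi P S x) = 0
  funext p
  have : (HK P U *ᵥ Phi P S x) p = (U *ᵥ Ext P (Phi P S x)) p.1 := by
    rw [Matrix.mulVec, Matrix.mulVec]
    show (∑ q : {q // P q}, U p.1 q.1 * Phi P S x q) = ∑ q : ι, U p.1 q * Ext P (Phi P S x) q
    rw [← sum_dite_subtype P (fun q : {q // P q} => U p.1 q.1 * Phi P S x q)]
    refine (Finset.sum_congr rfl (fun q _ => ?_)).symm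
    by_cases h : P q
    · rw [dif_pos h, ext_apply_pos P _ h]
    · rw [dif_neg h, ext_apply_neg P _ h, mul_zero]
  rw [this, phi_apply, key2 P S x hx', Matrix.mulVec_mulVec, hUS, Matrix.one_mulVec,
    ext_apply_neg P x p.2]
  rfl

lemma phi_phi {S U : Matrix ι ι F} (hUS : U * S = 1) (x : {q // P q} → F)
    (hx : x ∈ LinearMap.ker (HK P S).mulVecLin) :
    Phi P U (Phi P S x) = x := by
  have hx' : HK P S *ᵥ x = 0 := hx
  rw [phi_apply, phi_apply, key2 P S x hx', Matrix.mulVec_mulVec, hUS, Matrix.one_mulVec,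
    res_ext]

lemma rank_HK_eq {S U : Matrix ι ι F} (hUS : U * S = 1) (hSU : S * U = 1) :
    (HK P S).rank = (HK P U).rank := by
  have hker : Module.finrank F (LinearMap.ker (HK P S).mulVecLin) =
      Module.finrank F (LinearMap.ker (HK P U).mulVecLin) := by
    have e : (LinearMap.ker (HK P S).mulVecLin) ≃ₗ[F] (LinearMap.ker (HK P U).mulVecLin) := by
      refine LinearEquiv.ofLinear
        ((Phi P S).restrict (fun x hx => phi_mem_ker P hUS x hx))
        ((Phi P U).restrict (fun x hx => phi_mem_ker P hSU x hx)) ?_ ?_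
      · apply LinearMap.ext
        rintro ⟨x, hx⟩
        exact Subtype.ext (phi_phi P hSU x hx)
      · apply LinearMap.ext
        rintro ⟨x, hx⟩
        exact Subtype.ext (phi_phi P hUS x hx)
    exact e.finrank_eq
  have h1 := LinearMap.finrank_range_add_finrank_ker ((HK P S).mulVecLin)
  have h2 := LinearMap.finrank_range_add_finrank_ker ((HK P U).mulVecLin)
  have hr1 : (HK P S).rank = Module.finrank F (LinearMap.range (HK P S).mulVecLin) := rfl
  have hr2 : (HK P U).rank = Module.finrank F (LinearMap.range (HK P U).mulVecLin) := rfl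
  rw [hr1, hr2]
  omega

end Null


end LinAlg

section Chains
open SimpleGraph
variable {F : Type*} [Field F] {V : Type*} [Fintype V] [DecidableEq V]
variable {G : SimpleGraph V} {m n : V → ℕ} {ρ : V → V → ℕ}

/-- Product of transition matrices along a walk, with incoming edge `(c,a)` and
outgoing edge `(b,d)`. -/
noncomputable def midChain
    (Trans : ∀ k i j : V, Matrix (Fin (ρ k i)) (Fin (ρ j k)) F) :
    ∀ (a b : V), G.Walk a b → ∀ c d : V, Matrix (Fin (ρ b d)) (Fin (ρ c a)) F
  | a, _, .nil, c, d => Trans a d c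
  | a, b, .cons (v := a1) _ w, c, d => midChain Trans a1 b w a d * Trans a a1 c

/-- Product of transition matrices along a walk terminated by an input matrix. -/
noncomputable def inChain
    (Inp : ∀ k j : V, Matrix (Fin (ρ k j)) (Fin (n k)) F)
    (Trans : ∀ k i j : V, Matrix (Fin (ρ k i)) (Fin (ρ j k)) F) :
    ∀ (q j : V), G.Walk q j → ∀ k : V, Matrix (Fin (ρ j k)) (Fin (n q)) F
  | q, _, .nil, k => Inp q k
  | q, j, .cons (v := q1) _ w, k => midChain Trans q1 j w q k * Inp q q1

variable (Inp : ∀ k j : V, Matrix (Fin (ρ k j)) (Fin (n k)) F)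
variable (Trans : ∀ k i j : V, Matrix (Fin (ρ k i)) (Fin (ρ j k)) F)
variable (Out : ∀ k i : V, Matrix (Fin (m k)) (Fin (ρ i k)) F)

lemma outChain_nil (k j : V) : outChain Out Trans k k (.nil (G := G)) j = Out k j := rfl

lemma outChain_cons {k k' i : V} (h : G.Adj k k') (w : G.Walk k' i) (j : V) :
    outChain Out Trans k i (.cons h w) j = outChain Out Trans k' i w k * Trans k k' j := rfl

lemma outChain_append {a x x' i : V} (w1 : G.Walk a x) (h : G.Adj x x')
    (w2 : G.Walk x' i) (c : V) :
    outChain Out Trans a i (w1.append (SimpleGraph.Walk.cons h w2)) c =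
      outChain Out Trans x' i w2 x * midChain Trans a x w1 c x' := by
  induction w1 generalizing c with
  | nil => rfl
  | @cons a a1 x h1 w1' ih =>
    rw [SimpleGraph.Walk.cons_append, outChain_cons, ih, Matrix.mul_assoc]
    rfl

lemma pathMatrix_append {q j k p : V} (w1 : G.Walk q j) (hjk : G.Adj j k)
    (w2 : G.Walk k p) :
    pathMatrix Inp Trans Out q p (w1.append (SimpleGraph.Walk.cons hjk w2)) =
      outChain Out Trans k p w2 j * inChain Inp Trans q j w1 k := by
  cases w1 with
  | nil => rfl
  | @cons q q1 j h1 w1' =>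
    rw [SimpleGraph.Walk.cons_append]
    show outChain Out Trans q1 p (w1'.append (SimpleGraph.Walk.cons hjk w2)) q * Inp q q1 = _
    rw [outChain_append, Matrix.mul_assoc]
    rfl

end Chains

section GoodWalks
open SimpleGraph
variable {V : Type*} [Fintype V] [DecidableEq V] {G : SimpleGraph V}

lemma exists_good_walk {v j k : V} (hv : v ∈ side G j k) :
    Nonempty {w : G.Walk v j // w.IsPath ∧ ∀ x ∈ w.support, x ∈ side G j k} := by
  obtain ⟨w0⟩ := hv
  let π := w0.toPath
  let f : G.deleteEdges {s(j, k)} →g G := Hom.ofLE (G.deleteEdges_le _)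
  have hinj : Function.Injective f := fun a b hab => hab
  refine ⟨⟨(π.val.reverse.map f), ?_, ?_⟩⟩
  · exact Walk.map_isPath_of_injective hinj (π.prop.reverse)
  · intro x hx
    rw [Walk.support_map] at hx
    obtain ⟨y, hy, rfl⟩ := List.mem_map.mp hx
    rw [Walk.support_reverse, List.mem_reverse] at hy
    show y ∈ side G j k
    exact ⟨π.val.takeUntil y hy⟩

lemma composite_isPath (hG : G.IsTree) {q j k p : V} (hjk : G.Adj j k)
    (w1 : G.Walk q j) (w2 : G.Walk k p) (h1 : w1.IsPath) (h2 : w2.IsPath)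
    (hs1 : ∀ x ∈ w1.support, x ∈ side G j k) (hs2 : ∀ x ∈ w2.support, x ∈ side G k j) :
    (w1.append (Walk.cons hjk w2)).IsPath := by
  rw [Walk.isPath_def, Walk.support_append, Walk.support_cons, List.tail_cons]
  refine List.Nodup.append (Walk.isPath_def _ |>.mp h1) (Walk.isPath_def _ |>.mp h2) ?_
  intro x hx1 hx2
  exact side_disjoint hG hjk (hs1 x hx1) (hs2 x hx2)

end GoodWalks

section RankBound
open SimpleGraph
variable {F : Type*} [Field F] {V : Type*} [Fintype V] [DecidableEq V]
variable {G : SimpleGraph V} {n : V → ℕ} {ρ : V → V → ℕ}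

/-- The unit Hankel blocks of a TSS matrix have rank bounded by the rank profile. -/
lemma rank_hankel_le (hG : G.IsTree)
    {T : Matrix ((i : V) × Fin (n i)) ((j : V) × Fin (n j)) F}
    (R0 : TSSRepr G n n ρ T) {j k : V} (hjk : G.Adj j k) :
    (hankelBlock T (side G j k)).rank ≤ ρ j k := by
  classical
  -- choose good walks on each side
  have chC : ∀ c : {q : (i : V) × Fin (n i) // q.1 ∈ side G j k},
      {w : G.Walk c.1.1 j // w.IsPath ∧ ∀ x ∈ w.support, x ∈ side G j k} :=
    fun c => Classical.choice (exists_good_walk c.2)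
  have chR : ∀ r : {p : (i : V) × Fin (n i) // p.1 ∈ (side G j k)ᶜ},
      {w : G.Walk r.1.1 k // w.IsPath ∧ ∀ x ∈ w.support, x ∈ side G k j} :=
    fun r => Classical.choice (exists_good_walk (show r.1.1 ∈ side G k j by
      have h2 := r.2
      rw [← compl_side hG hjk]
      exact h2))
  set RM : Matrix {p : (i : V) × Fin (n i) // p.1 ∈ (side G j k)ᶜ} (Fin (ρ j k)) F :=
    fun r l => outChain R0.Out R0.Trans k r.1.1 (chR r).1.reverse j r.1.2 l with hRM
  set CM : Matrix (Fin (ρ j k)) {q : (i : V) × Fin (n i) // q.1 ∈ side G j k} F :=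
    fun l c => inChain R0.Inp R0.Trans c.1.1 j (chC c).1 k l c.1.2 with hCM
  have hfac : hankelBlock T (side G j k) = RM * CM := by
    ext r c
    have hne : r.1.1 ≠ c.1.1 := by
      intro he
      exact r.2 (he ▸ c.2)
    have hw2 : ((chR r).1.reverse : G.Walk k r.1.1).IsPath := (chR r).2.1.reverse
    have hs2 : ∀ x ∈ ((chR r).1.reverse).support, x ∈ side G k j := by
      intro x hx
      rw [Walk.support_reverse, List.mem_reverse] at hx
      exact (chR r).2.2 x hx
    have hpath := composite_isPath hG hjk (chC c).1 (chR r).1.reverse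
      (chC c).2.1 hw2 (chC c).2.2 hs2
    have hoff := R0.offdiag hne ((chC c).1.append (Walk.cons hjk (chR r).1.reverse)) hpath
    rw [pathMatrix_append] at hoff
    have : T ⟨r.1.1, r.1.2⟩ ⟨c.1.1, c.1.2⟩ =
        (outChain R0.Out R0.Trans k r.1.1 (chR r).1.reverse j *
          inChain R0.Inp R0.Trans c.1.1 j (chC c).1 k) r.1.2 c.1.2 := by
      rw [← hoff]; rfl
    show T r.1 c.1 = _
    rw [show (r.1 : (i : V) × Fin (n i)) = ⟨r.1.1, r.1.2⟩ from rfl,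
      show (c.1 : (i : V) × Fin (n i)) = ⟨c.1.1, c.1.2⟩ from rfl, this,
      Matrix.mul_apply, Matrix.mul_apply]
  rw [hfac]
  exact le_trans (le_trans (Matrix.rank_mul_le RM CM) (min_le_right _ _))
    (le_trans (Matrix.rank_le_card_height CM) (by simp))

end RankBound

/-- TSS inverse: if `T` is an invertible TSS matrix on a tree `G` with rank
profile `ρ` (with identical row and column block partitions), then `T⁻¹` admits a TSS
representation on `G` with the same rank profile `ρ`. -/
theorem tss_inv {F : Type*} [Field F] {V : Type*} [Fintype V] [DecidableEq V]
    (G : SimpleGraph V) (hG : G.IsTree) (n : V → ℕ) (ρ : V → V → ℕ)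
    (T : Matrix ((i : V) × Fin (n i)) ((j : V) × Fin (n j)) F)
    (hT : IsUnit T) (h : Nonempty (TSSRepr G n n ρ T)) :
    Nonempty (TSSRepr G n n ρ T⁻¹) := by
  classical
  obtain ⟨R0⟩ := h
  have hdet : IsUnit T.det := (Matrix.isUnit_iff_isUnit_det T).mp hT
  have hTS : T * T⁻¹ = 1 := Matrix.mul_nonsing_inv T hdet
  have hST : T⁻¹ * T = 1 := Matrix.nonsing_inv_mul T hdet
  have hrk : ∀ j k : V, G.Adj j k → (hankelBlock T⁻¹ (side G j k)).rank ≤ ρ j k := by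
    intro j k hjk
    have h1 : (hankelBlock T⁻¹ (side G j k)).rank = (hankelBlock T (side G j k)).rank :=
      Null.rank_HK_eq (fun q : (i : V) × Fin (n i) => q.1 ∈ side G j k) hTS hST
    rw [h1]
    exact rank_hankel_le hG R0 hjk
  have hfact : ∀ j k : V, G.Adj j k →
      ∃ (RM : Matrix {p : (i : V) × Fin (n i) // p.1 ∈ (side G j k)ᶜ} (Fin (ρ j k)) F)
        (CM : Matrix (Fin (ρ j k)) {q : (i : V) × Fin (n i) // q.1 ∈ side G j k} F),
      hankelBlock T⁻¹ (side G j k) = RM * CM ∧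
      ∀ l, CM l ∈ Submodule.span F
        (Set.range fun p => (hankelBlock T⁻¹ (side G j k)) p) := by
    intro j k hjk
    exact exists_factorization _ (hrk j k hjk)
  choose RM CM hfac hspan using hfact
  have htrans : ∀ k i j : V, (hc : G.Adj j k ∧ G.Adj k i ∧ i ≠ j) →
      ∃ X : Matrix (Fin (ρ k i)) (Fin (ρ j k)) F,
        X * CM j k hc.1 = fun l q =>
          CM k i hc.2.1 l ⟨q.1, side_subset_side hG hc.1 hc.2.1 hc.2.2 q.2⟩ := by
    intro k i j hc
    apply exists_left_solution
    intro g
    have hx := hspan k i hc.2.1 g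
    have hcomp := comp_mem_span (fun p => (hankelBlock T⁻¹ (side G k i)) p)
      (CM k i hc.2.1 g)
      (fun q : {q : (t : V) × Fin (n t) // q.1 ∈ side G j k} =>
        (⟨q.1, side_subset_side hG hc.1 hc.2.1 hc.2.2 q.2⟩ : {q // q.1 ∈ side G k i}))
      hx
    have hle : Submodule.span F (Set.range fun p => fun q :
          {q : (t : V) × Fin (n t) // q.1 ∈ side G j k} =>
          (hankelBlock T⁻¹ (side G k i)) p
            ⟨q.1, side_subset_side hG hc.1 hc.2.1 hc.2.2 q.2⟩) ≤
        Submodule.span F (Set.range fun l => CM j k hc.1 l) := by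
      rw [Submodule.span_le]
      rintro x ⟨p, hpx⟩
      have hp' : p.1.1 ∈ (side G j k)ᶜ :=
        fun hm => p.2 (side_subset_side hG hc.1 hc.2.1 hc.2.2 hm)
      have hx2 : x = (RM j k hc.1 * CM j k hc.1) ⟨p.1, hp'⟩ := by
        rw [← hpx, ← hfac j k hc.1]
        rfl
      rw [hx2]
      exact row_mul_mem_span (RM j k hc.1) (CM j k hc.1) ⟨p.1, hp'⟩
    exact hle hcomp
  choose Xc hX using htrans
  set Inp' : ∀ kk jj : V, Matrix (Fin (ρ kk jj)) (Fin (n kk)) F := fun kk jj =>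
    if h : G.Adj kk jj then
      (fun l b => CM kk jj h l ⟨⟨kk, b⟩, self_mem_side kk jj⟩) else 0 with hInp'
  set Trans' : ∀ kk ii jj : V, Matrix (Fin (ρ kk ii)) (Fin (ρ jj kk)) F := fun kk ii jj =>
    if h : G.Adj jj kk ∧ G.Adj kk ii ∧ ii ≠ jj then Xc kk ii jj h else 0 with hTrans'
  set Out' : ∀ kk ii : V, Matrix (Fin (n kk)) (Fin (ρ ii kk)) F := fun kk ii =>
    if h : G.Adj ii kk then
      (fun a l => RM ii kk h ⟨⟨kk, a⟩,
        fun hm => side_disjoint hG h hm (self_mem_side kk ii)⟩ l) else 0 with hOut'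
  have key : ∀ (i k : V) (w : G.Walk k i) (j : V) (hjk : G.Adj j k),
      (SimpleGraph.Walk.cons hjk w).IsPath → ∀ (a : Fin (n i))
        (q : {q : (t : V) × Fin (n t) // q.1 ∈ side G j k}),
      (outChain Out' Trans' k i w j * CM j k hjk) a q = T⁻¹ ⟨i, a⟩ q.1 := by
    intro i k w
    induction w with
    | nil =>
      rename_i i
      intro j hjk hp a q
      have hO : Out' i j = fun a l => RM j i hjk ⟨⟨i, a⟩,
          fun hm => side_disjoint hG hjk hm (self_mem_side i j)⟩ l := by
        rw [hOut']
        exact dif_pos hjk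
      have h2 : T⁻¹ ⟨i, a⟩ q.1 = (RM j i hjk * CM j i hjk)
          ⟨⟨i, a⟩, fun hm => side_disjoint hG hjk hm (self_mem_side i j)⟩ q := by
        rw [← hfac j i hjk]
        rfl
      rw [outChain_nil, hO, h2, Matrix.mul_apply]
      rfl
    | @cons k k' i h w' ih =>
      intro j hjk hp a q
      have hk'j : k' ≠ j := by
        have h2 := (SimpleGraph.Walk.cons_isPath_iff hjk (.cons h w')).mp hp
        intro he
        have hm : k' ∈ (SimpleGraph.Walk.cons h w').support := by
          rw [SimpleGraph.Walk.support_cons]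
          exact List.mem_cons_of_mem _ w'.start_mem_support
        exact h2.2 (he ▸ hm)
      have hcond : G.Adj j k ∧ G.Adj k k' ∧ k' ≠ j := ⟨hjk, h, hk'j⟩
      have hT' : Trans' k k' j = Xc k k' j hcond := by
        rw [hTrans']
        exact dif_pos hcond
      rw [outChain_cons, Matrix.mul_assoc, hT',
        show CM j k hjk = CM j k hcond.1 from rfl, hX k k' j hcond]
      have hih := ih k h hp.of_cons a
        ⟨q.1, side_subset_side hG hcond.1 hcond.2.1 hcond.2.2 q.2⟩
      rw [Matrix.mul_apply] at hih
      exact hih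
  refine ⟨⟨fun kk => blockOf T⁻¹ kk kk, Inp', Trans', Out', fun i => rfl, ?_⟩⟩
  intro i j hij w hw
  cases w with
  | nil => exact absurd rfl hij
  | @cons j p1 i hadj w' =>
    ext a b
    show T⁻¹ ⟨i, a⟩ ⟨j, b⟩ = (outChain Out' Trans' p1 i w' j * Inp' j p1) a b
    have hkey := key i p1 w' j hadj hw a ⟨⟨j, b⟩, self_mem_side j p1⟩
    rw [Matrix.mul_apply] at hkey
    rw [Matrix.mul_apply, ← hkey]
    refine Finset.sum_congr rfl (fun l _ => ?_)
    have hI : Inp' j p1 = fun l b => CM j p1 hadj l ⟨⟨j, b⟩, self_mem_side j p1⟩ := by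
      rw [hInp']
      exact dif_pos hadj
    rw [hI]

end TSS
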